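/- arXiv:2008.10440 — 3 statements merged into one kernel-verified Lean document; each statement's English description precedes it below -/
import Mathlib

section
/- (Generalized Csiszar–Kullback inequality) Let (Ω, Σ, μ) be a probability space, let g ∈ L¹(μ) be strictly positive a.e. with ∫ g dμ = 1, and let f ∈ L¹(μ) with f ≥ 0 a.e. Then 0 ≤ (1 + ‖f − g‖_{L¹(μ)})·(log(1 + ‖f − g‖_{L¹(μ)}) − 1) + 1 ≤ ∫_Ω (f·log(f/g) − f + g) dμ. -/
open MeasureTheory

namespace CKHelpers
open Real

lemma gibbs_pt {a b : ℝ} (ha : 0 < a) (hb : 0 < b) : a - b ≤ a * Real.log (a / b) := by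
  have h := Real.log_le_sub_one_of_pos (show (0:ℝ) < b / a by positivity)
  have h2 : a * Real.log (b / a) ≤ a * (b / a - 1) := mul_le_mul_of_nonneg_left h ha.le
  have h3 : a * (b / a - 1) = b - a := by field_simp
  have h4 : Real.log (a / b) = - Real.log (b / a) := by
    rw [← Real.log_inv]; congr 1; field_simp
  rw [h4]; linarith

lemma phi_nonneg {u : ℝ} (hu : 0 < u) : 0 ≤ u * Real.log u - u + 1 := by
  have := gibbs_pt hu one_pos
  simp at this
  linarith

lemma d_anti : StrictAntiOn
    (fun t : ℝ => t * Real.log t - (2 - t) * Real.log (2 - t) - 2*t + 2) (Set.Icc 0 1) := by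
  apply strictAntiOn_of_deriv_neg (convex_Icc 0 1)
  · have : Continuous (fun t : ℝ => t * Real.log t - (2 - t) * Real.log (2 - t) - 2*t + 2) := by
      apply Continuous.add
      apply Continuous.sub
      apply Continuous.sub
      · exact Real.continuous_mul_log
      · exact Real.continuous_mul_log.comp (by continuity)
      · exact continuous_const.mul continuous_id
      · exact continuous_const
    exact this.continuousOn
  · intro t ht
    rw [interior_Icc] at ht
    obtain ⟨ht0, ht1⟩ := ht
    have h2t : (0:ℝ) < 2 - t := by linarith
    have h1 : HasDerivAt (fun t : ℝ => t * Real.log t) (Real.log t + 1) t :=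
      Real.hasDerivAt_mul_log ht0.ne'
    have h2 : HasDerivAt (fun t : ℝ => (2 - t) * Real.log (2 - t)) (-(Real.log (2 - t) + 1)) t := by
      have hc : HasDerivAt (fun t : ℝ => 2 - t) (-1) t := by
        simpa using (hasDerivAt_id' t).const_sub (2:ℝ)
      have := (Real.hasDerivAt_mul_log h2t.ne').comp t hc
      simpa [mul_comm, Function.comp_def] using this
    have hd : HasDerivAt (fun t : ℝ => t * Real.log t - (2 - t) * Real.log (2 - t) - 2*t + 2)
        (Real.log t + Real.log (2 - t)) t := by
      have := ((h1.sub h2).sub ((hasDerivAt_id t).const_mul 2)).add_const (2:ℝ)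
      exact this.congr_deriv (by ring)
    rw [hd.deriv, ← Real.log_mul ht0.ne' h2t.ne']
    apply Real.log_neg (by nlinarith)
    nlinarith

lemma step1 {t : ℝ} (ht : 0 ≤ t) :
    (1 + |t-1|) * Real.log (1 + |t-1|) - (1 + |t-1|) + 1 ≤ t * Real.log t - t + 1 := by
  rcases le_or_gt 1 t with h | h
  · rw [abs_of_nonneg (by linarith)]
    have e : 1 + (t - 1) = t := by ring
    rw [e]
  · rw [abs_of_neg (by linarith)]
    have e : 1 + -(t - 1) = 2 - t := by ring
    rw [e]
    have hd := d_anti (Set.mem_Icc.mpr ⟨ht, h.le⟩) (Set.mem_Icc.mpr ⟨zero_le_one, le_refl 1⟩) h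
    simp only [Real.log_one] at hd
    norm_num at hd
    linarith

lemma step2 {s s₀ : ℝ} (hs : 0 ≤ s) (hs0 : 0 ≤ s₀) :
    (1+s₀) * Real.log (1+s₀) - (1+s₀) + 1 + Real.log (1+s₀) * (s - s₀)
      ≤ (1+s) * Real.log (1+s) - (1+s) + 1 := by
  have hu : (0:ℝ) < 1 + s := by linarith
  have hv : (0:ℝ) < 1 + s₀ := by linarith
  have hg := gibbs_pt hu hv
  rw [Real.log_div hu.ne' hv.ne'] at hg
  nlinarith [hg]

end CKHelpers

open CKHelpers in
theorem generalized_csiszar_kullback {Ω : Type*} [MeasurableSpace Ω]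
    (μ : Measure Ω) [IsProbabilityMeasure μ]
    (f g : Ω → ℝ) (hf : Integrable f μ) (hg : Integrable g μ)
    (hg0 : ∀ᵐ x ∂μ, 0 < g x) (hgint : ∫ x, g x ∂μ = 1)
    (hf0 : ∀ᵐ x ∂μ, 0 ≤ f x)
    (hent : Integrable (fun x => f x * Real.log (f x / g x) - f x + g x) μ) :
    0 ≤ (1 + ∫ x, |f x - g x| ∂μ) * (Real.log (1 + ∫ x, |f x - g x| ∂μ) - 1) + 1 ∧
    (1 + ∫ x, |f x - g x| ∂μ) * (Real.log (1 + ∫ x, |f x - g x| ∂μ) - 1) + 1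
      ≤ ∫ x, (f x * Real.log (f x / g x) - f x + g x) ∂μ := by
  set I := ∫ x, |f x - g x| ∂μ with hI
  have hI0 : 0 ≤ I := integral_nonneg fun x => abs_nonneg _
  have h1I : (0:ℝ) < 1 + I := by linarith
  set L := Real.log (1 + I) with hL
  have hphi : 0 ≤ (1 + I) * L - (1 + I) + 1 := phi_nonneg h1I
  have hring : (1 + I) * (L - 1) + 1 = (1 + I) * L - (1 + I) + 1 := by ring
  refine ⟨by linarith, ?_⟩
  set c := (1 + I) * L - (1 + I) + 1 with hc
  -- pointwise bound
  have hpt : ∀ᵐ x ∂μ, c * g x + L * (|f x - g x| - I * g x)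
      ≤ f x * Real.log (f x / g x) - f x + g x := by
    filter_upwards [hg0, hf0] with x hbx hax
    set a := f x
    set b := g x
    set t := a / b with htdef
    have ht0 : 0 ≤ t := div_nonneg hax hbx.le
    have hb' : b ≠ 0 := hbx.ne'
    have hbt : b * t = a := by rw [htdef]; field_simp
    have habs : b * |t - 1| = |a - b| := by
      nth_rewrite 1 [show b = |b| from (abs_of_pos hbx).symm]
      rw [← abs_mul]
      congr 1
      rw [htdef]; field_simp
    have c2 := step2 (abs_nonneg (t - 1)) hI0
    have c1 := step1 ht0
    have key : c + L * (|t - 1| - I) ≤ t * Real.log t - t + 1 := by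
      rw [hc, hL]
      calc (1 + I) * Real.log (1 + I) - (1 + I) + 1 + Real.log (1 + I) * (|t-1| - I)
          ≤ (1 + |t-1|) * Real.log (1 + |t-1|) - (1 + |t-1|) + 1 := c2
        _ ≤ t * Real.log t - t + 1 := c1
    have hmul := mul_le_mul_of_nonneg_left key hbx.le
    have e1 : b * (t * Real.log t - t + 1) = a * Real.log (a / b) - a + b := by
      rw [show b * (t * Real.log t - t + 1) = (b * t) * Real.log t - b * t + b by ring,
        hbt, htdef]
    have e2 : b * (c + L * (|t - 1| - I)) = c * b + L * (|a - b| - I * b) := by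
      rw [show b * (c + L * (|t - 1| - I)) = c * b + L * (b * |t - 1| - I * b) by ring, habs]
    rw [e1, e2] at hmul
    exact hmul
  have hint1 : Integrable (fun x => c * g x + L * (|f x - g x| - I * g x)) μ :=
    (hg.const_mul c).add (((hf.sub hg).abs.sub (hg.const_mul I)).const_mul L)
  have hmono := integral_mono_ae hint1 hent hpt
  have i1 : Integrable (fun x => (c - L*I) * g x) μ := hg.const_mul _
  have i2 : Integrable (fun x => L * |f x - g x|) μ := (hf.sub hg).abs.const_mul L
  have heq : ∫ x, (c * g x + L * (|f x - g x| - I * g x)) ∂μ = c := by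
    have e : (fun x => c * g x + L * (|f x - g x| - I * g x))
        = fun x => (c - L*I) * g x + L * |f x - g x| := by funext x; ring
    rw [e, integral_add i1 i2, integral_const_mul, integral_const_mul, hgint, ← hI]
    ring
  rw [heq] at hmono
  linarith
end

section
/- Let λ > 0, F ≥ 0, H > 0, and let w : [0,∞) → ℝ≥0 be differentiable and satisfy w'(t) ≤ F − 2λ·w(t) + H·w(t)³ whenever w(t) ≤ √(λ/H). If w(0) + F/λ < √(λ/H), then w(t) ≤ w(0)·e^{−λt} + F/λ < √(λ/H) for all t ≥ 0. -/
open Real Set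

theorem cubic_bootstrap (lam F H : ℝ) (hlam : 0 < lam) (hF : 0 ≤ F) (hH : 0 < H)
    (w : ℝ → ℝ) (hw : Differentiable ℝ w) (hwnn : ∀ t, 0 ≤ t → 0 ≤ w t)
    (hineq : ∀ t, 0 ≤ t → w t ≤ Real.sqrt (lam / H) →
      deriv w t ≤ F - 2 * lam * w t + H * (w t) ^ 3)
    (hsmall : w 0 + F / lam < Real.sqrt (lam / H)) :
    ∀ t, 0 ≤ t →
      w t ≤ w 0 * Real.exp (-lam * t) + F / lam ∧
      w 0 * Real.exp (-lam * t) + F / lam < Real.sqrt (lam / H) := by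
  intro t ht
  have hw0 : 0 ≤ w 0 := hwnn 0 le_rfl
  have hexp1 : Real.exp (-lam * t) ≤ 1 := by
    rw [Real.exp_le_one_iff]; nlinarith
  have hB2 : w 0 * Real.exp (-lam * t) + F / lam < Real.sqrt (lam / H) := by
    nlinarith [Real.exp_pos (-lam * t)]
  refine ⟨?_, hB2⟩
  -- main part: w t ≤ w 0 * exp(-lam t) + F/lam
  have hFl : 0 ≤ F / lam := div_nonneg hF hlam.le
  -- for each small ε > 0, w t ≤ B t + ε (1+t)
  have key : ∀ ε : ℝ, 0 < ε → w 0 + F / lam + ε * (1 + t) < Real.sqrt (lam / H) →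
      w t ≤ w 0 * Real.exp (-lam * t) + F / lam + ε * (1 + t) := by
    intro ε hε hεs
    have := image_le_of_deriv_right_lt_deriv_boundary (a := 0) (b := t)
      (f := w) (f' := deriv w)
      (hw.continuous.continuousOn)
      (fun x _ => (hw x).hasDerivAt.hasDerivWithinAt)
      (B := fun s => w 0 * Real.exp (-lam * s) + F / lam + ε * (1 + s))
      (B' := fun s => w 0 * (Real.exp (-lam * s) * (-lam)) + ε)
      (by simp only [mul_zero, neg_zero, Real.exp_zero, mul_one, add_zero]; nlinarith)
      (fun x => by
        have h1 : HasDerivAt (fun s : ℝ => Real.exp (-lam * s)) (Real.exp (-lam * x) * (-lam)) x := by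
          simpa using (((hasDerivAt_id x).const_mul (-lam)).exp)
        have h2 := ((h1.const_mul (w 0)).add_const (F / lam)).add
          (((hasDerivAt_id x).const_add (1 : ℝ)).const_mul ε)
        exact h2.congr_deriv (by ring))
      ?_
    · exact this (right_mem_Icc.2 ht)
    · intro x hx heq
      obtain ⟨hx0, hxt⟩ := hx
      have hex : Real.exp (-lam * x) ≤ 1 := by rw [Real.exp_le_one_iff]; nlinarith
      have hexp : 0 < Real.exp (-lam * x) := Real.exp_pos _
      have hwM : w x ≤ Real.sqrt (lam / H) := by
        rw [heq]; nlinarith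
      have hd := hineq x hx0 hwM
      have hwx : 0 ≤ w x := hwnn x hx0
      have hsq : w x ^ 2 ≤ lam / H := by
        nlinarith [Real.sq_sqrt (le_of_lt (div_pos hlam hH)),
          Real.sqrt_nonneg (lam / H)]
      have hHw2 : w x ^ 2 * H ≤ lam := (le_div_iff₀ hH).mp hsq
      have hcube : H * w x ^ 3 ≤ lam * w x := by nlinarith [mul_le_mul_of_nonneg_right hHw2 hwx]
      have hd2 : deriv w x ≤ F - lam * w x := by nlinarith
      rw [heq] at hd2
      have hFl2 : lam * (F / lam) = F := by field_simp
      nlinarith [mul_pos hlam hε, mul_nonneg (mul_pos hlam hε).le hx0]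
  -- take ε → 0
  have hδ0 : 0 < Real.sqrt (lam / H) - (w 0 + F / lam) := by linarith
  refine le_of_forall_pos_le_add ?_
  intro δ hδ
  set ε := min ((Real.sqrt (lam / H) - (w 0 + F / lam)) / (2 * (1 + t))) (δ / (1 + t)) with hεdef
  have h1t : 0 < 1 + t := by linarith
  have hεpos : 0 < ε := lt_min (by positivity) (by positivity)
  have h1 : ε * (1 + t) ≤ (Real.sqrt (lam / H) - (w 0 + F / lam)) / 2 := by
    have := min_le_left ((Real.sqrt (lam / H) - (w 0 + F / lam)) / (2 * (1 + t))) (δ / (1 + t))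
    calc ε * (1 + t) ≤ (Real.sqrt (lam / H) - (w 0 + F / lam)) / (2 * (1 + t)) * (1 + t) := by
          exact mul_le_mul_of_nonneg_right this h1t.le
      _ = (Real.sqrt (lam / H) - (w 0 + F / lam)) / 2 := by field_simp
  have h2 : ε * (1 + t) ≤ δ := by
    have := min_le_right ((Real.sqrt (lam / H) - (w 0 + F / lam)) / (2 * (1 + t))) (δ / (1 + t))
    calc ε * (1 + t) ≤ δ / (1 + t) * (1 + t) := mul_le_mul_of_nonneg_right this h1t.le
      _ = δ := by field_simp
  have := key ε hεpos (by linarith)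
  linarith
end

section
/- Let λ > 0, ε ≥ 0, G, H > 0, and let w : [0,∞) → ℝ≥0 be differentiable and satisfy w'(t) ≤ ε − 2λ·w(t) + G·w(t)² + H·w(t)³ whenever G·w(t) + H·w(t)² ≤ λ. Suppose w(0) and ε are small enough that G·(w(0) + ε/λ) + H·(w(0) + ε/λ)² ≤ λ. Then w(t) ≤ w(0) + ε/λ for all t ≥ 0. -/
set_option maxHeartbeats 1000000

open Set Real

theorem quadratic_cubic_bootstrap (lam eps G H : ℝ) (hlam : 0 < lam) (heps : 0 ≤ eps)
    (hG : 0 < G) (hH : 0 < H)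
    (w : ℝ → ℝ) (hw : Differentiable ℝ w) (hwnn : ∀ t, 0 ≤ t → 0 ≤ w t)
    (hineq : ∀ t, 0 ≤ t → G * w t + H * (w t) ^ 2 ≤ lam →
      deriv w t ≤ eps - 2 * lam * w t + G * (w t) ^ 2 + H * (w t) ^ 3)
    (hsmall : G * (w 0 + eps / lam) + H * (w 0 + eps / lam) ^ 2 ≤ lam) :
    ∀ t, 0 ≤ t → w t ≤ w 0 + eps / lam := by
  intro t ht
  have hw0 : 0 ≤ w 0 := hwnn 0 le_rfl
  have hepslam : 0 ≤ eps / lam := div_nonneg heps hlam.le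
  have heqel : lam * (eps / lam) = eps := by field_simp
  obtain ⟨M, hMdef⟩ : ∃ M, M = w 0 + eps / lam := ⟨_, rfl⟩
  rw [← hMdef] at hsmall ⊢
  have hM0 : 0 ≤ M := by rw [hMdef]; positivity
  have hw0M : w 0 ≤ M := by rw [hMdef]; linarith
  have hlamM : lam * M = lam * w 0 + eps := by rw [hMdef, mul_add, heqel]
  have hcont : ContinuousOn w (Icc 0 t) := hw.continuous.continuousOn
  have hder : ∀ x ∈ Ico (0:ℝ) t, HasDerivWithinAt w (deriv w x) (Ici x) x :=
    fun x _ => (hw x).hasDerivAt.hasDerivWithinAt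
  have hmem : t ∈ Icc (0:ℝ) t := ⟨ht, le_refl t⟩
  -- the RHS of the differential inequality evaluated at level M
  have hfM : eps - 2 * lam * M + G * M ^ 2 + H * M ^ 3 =
      -(lam * w 0) + M * (G * M + H * M ^ 2 - lam) := by linear_combination -hlamM
  have hfM0 : eps - 2 * lam * M + G * M ^ 2 + H * M ^ 3 ≤ 0 := by
    rw [hfM]
    have h2 : M * (G * M + H * M ^ 2 - lam) ≤ 0 :=
      mul_nonpos_of_nonneg_of_nonpos hM0 (by linarith)
    nlinarith [mul_nonneg hlam.le hw0]
  rcases lt_or_eq_of_le hfM0 with hlt | hzero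
  · -- Case 1: strict; constant barrier B = M
    have := image_le_of_deriv_right_lt_deriv_boundary (f := w) (f' := deriv w)
      (B := fun _ => M) (B' := fun _ => 0) hcont hder hw0M
      (fun x => hasDerivAt_const x M) ?_ hmem
    · exact this
    · intro x hx hwx
      have hwx' : w x = M := hwx
      have hxd := hineq x hx.1 (by rw [hwx']; exact hsmall)
      rw [hwx'] at hxd
      show deriv w x < 0
      linarith
  · -- Case 2: eps - 2λM + GM² + HM³ = 0; then w 0 = 0 and M*(λ - GM - HM²) = 0
    have hkey : lam * w 0 = 0 ∧ M * (G * M + H * M ^ 2 - lam) = 0 := by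
      have h2 : M * (G * M + H * M ^ 2 - lam) ≤ 0 :=
        mul_nonpos_of_nonneg_of_nonpos hM0 (by linarith)
      have h3 : 0 ≤ lam * w 0 := mul_nonneg hlam.le hw0
      constructor <;> linarith
    have hw00 : w 0 = 0 := by
      rcases mul_eq_zero.1 hkey.1 with h | h
      · exact absurd h hlam.ne'
      · exact h
    rcases eq_or_lt_of_le hM0 with hMz | hMpos
    · -- Case 2a: M = 0, so eps = 0; barrier δ·exp(-(λ/2)x) for small δ, let δ → 0
      rw [← hMz]
      have heps0 : eps = 0 := by
        have h1 : lam * M = 0 := by rw [← hMz, mul_zero]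
        have h2 : lam * w 0 = 0 := hkey.1
        linarith [hlamM]
      have key : ∀ δ : ℝ, 0 < δ → w t ≤ 0 + δ := by
        intro δ hδ
        obtain ⟨c, hcdef⟩ : ∃ c, c = min δ (min 1 (lam / (G + H))) := ⟨_, rfl⟩
        have hc0 : 0 < c := by
          rw [hcdef]; exact lt_min hδ (lt_min one_pos (div_pos hlam (by linarith)))
        have hc1 : c ≤ 1 := by
          rw [hcdef]; exact le_trans (min_le_right _ _) (min_le_left _ _)
        have hc2 : c ≤ lam / (G + H) := by
          rw [hcdef]; exact le_trans (min_le_right _ _) (min_le_right _ _)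
        have hcδ : c ≤ δ := by rw [hcdef]; exact min_le_left _ _
        have hcGH : (G + H) * c ≤ lam := by
          rw [← le_div_iff₀' (by linarith)]; exact hc2
        have hbound : ∀ x ∈ Ico (0:ℝ) t, w x = c * exp (-(lam/2) * x) →
            deriv w x < c * exp (-(lam/2) * x) * (-(lam/2)) := by
          intro x hx hwx
          obtain ⟨s, hsdef⟩ : ∃ s, s = c * exp (-(lam/2) * x) := ⟨_, rfl⟩
          rw [← hsdef] at hwx ⊢
          have hs0 : 0 < s := by rw [hsdef]; exact mul_pos hc0 (exp_pos _)
          have hsc : s ≤ c := by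
            rw [hsdef]
            have h1 : exp (-(lam/2) * x) ≤ 1 := exp_le_one_iff.2 (by nlinarith [hx.1])
            nlinarith
          have hs1 : s ≤ 1 := le_trans hsc hc1
          have hss : s ^ 2 ≤ s := by nlinarith
          have hGH : G * s + H * s ^ 2 ≤ lam := by
            have h1 : H * s ^ 2 ≤ H * s := mul_le_mul_of_nonneg_left hss hH.le
            have h2 : (G + H) * s ≤ (G + H) * c :=
              mul_le_mul_of_nonneg_left hsc (by linarith)
            nlinarith
          have hxd := hineq x hx.1 (by rw [hwx]; exact hGH)
          rw [hwx, heps0] at hxd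
          have h1 : G * s ^ 2 + H * s ^ 3 ≤ lam * s := by nlinarith
          nlinarith
        have hBder : ∀ x : ℝ, HasDerivAt (fun y => c * exp (-(lam/2) * y))
            (c * exp (-(lam/2) * x) * (-(lam/2))) x := by
          intro x
          have h := (((hasDerivAt_id x).const_mul (-(lam/2))).exp).const_mul c
          refine h.congr_deriv ?_
          simp only [id_eq]
          ring
        have hwt := image_le_of_deriv_right_lt_deriv_boundary (f := w) (f' := deriv w)
          (B := fun y => c * exp (-(lam/2) * y))
          (B' := fun x => c * exp (-(lam/2) * x) * (-(lam/2))) hcont hder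
          (by rw [hw00]; positivity) hBder hbound hmem
        have hle : c * exp (-(lam/2) * t) ≤ c := by
          have h1 : exp (-(lam/2) * t) ≤ 1 := exp_le_one_iff.2 (by nlinarith)
          nlinarith
        have h2 : w t ≤ c := le_trans hwt hle
        linarith
      linarith [le_of_forall_pos_le_add key]
    · -- Case 2b: M > 0, so G*M + H*M² = λ; barrier M - c·exp(-x)
      have hGHM : G * M + H * M ^ 2 = lam := by
        rcases mul_eq_zero.1 hkey.2 with h | h
        · exact absurd h (ne_of_gt hMpos)
        · linarith
      have hepsM : eps = lam * M := by
        have h2 : lam * w 0 = 0 := hkey.1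
        linarith [hlamM]
      obtain ⟨c, hcdef⟩ : ∃ c, c = min M ((1 + H * M ^ 2) / (2 * (G + 3 * H * M))) := ⟨_, rfl⟩
      have hden : 0 < 2 * (G + 3 * H * M) := by positivity
      have hc0 : 0 < c := by
        rw [hcdef]; exact lt_min hMpos (div_pos (by positivity) hden)
      have hcM : c ≤ M := by rw [hcdef]; exact min_le_left _ _
      have hc2 : c * (2 * (G + 3 * H * M)) ≤ 1 + H * M ^ 2 := by
        rw [← le_div_iff₀ hden, hcdef]; exact min_le_right _ _
      have hbound : ∀ x ∈ Ico (0:ℝ) t, w x = M - c * exp (-x) →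
          deriv w x < c * exp (-x) := by
        intro x hx hwx
        obtain ⟨s, hsdef⟩ : ∃ s, s = c * exp (-x) := ⟨_, rfl⟩
        rw [← hsdef] at hwx ⊢
        have hs0 : 0 < s := by rw [hsdef]; exact mul_pos hc0 (exp_pos _)
        have hsc : s ≤ c := by
          rw [hsdef]
          have h1 : exp (-x) ≤ 1 := exp_le_one_iff.2 (by linarith [hx.1])
          nlinarith
        have hwxnn : 0 ≤ M - s := by linarith
        have hGH : G * (M - s) + H * (M - s) ^ 2 ≤ lam := by
          nlinarith [mul_pos hG hs0,
            mul_nonneg (mul_nonneg hH.le hs0.le) (show (0:ℝ) ≤ 2 * M - s by linarith)]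
        have hxd := hineq x hx.1 (by rw [hwx]; exact hGH)
        rw [hwx] at hxd
        -- RHS = -H M² s + (G+3HM) s² - H s³  (exact identity using hepsM, hGHM)
        have hid : eps - 2 * lam * (M - s) + G * (M - s) ^ 2 + H * (M - s) ^ 3 =
            - (H * M ^ 2) * s + (G + 3 * H * M) * s ^ 2 - H * s ^ 3 := by
          rw [hepsM]; linear_combination (M - 2 * s) * hGHM
        rw [hid] at hxd
        have h2 : (G + 3 * H * M) * s ^ 2 ≤ (1 + H * M ^ 2) / 2 * s := by
          have h1 : (G + 3 * H * M) * s ≤ (G + 3 * H * M) * c :=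
            mul_le_mul_of_nonneg_left hsc (by positivity)
          have h2' : (G + 3 * H * M) * s ≤ (1 + H * M ^ 2) / 2 := by linarith
          nlinarith [mul_le_mul_of_nonneg_right h2' hs0.le]
        nlinarith [mul_pos hH (pow_pos hs0 3),
          mul_nonneg (mul_nonneg hH.le (sq_nonneg M)) hs0.le]
      have hBder : ∀ x : ℝ, HasDerivAt (fun y => M - c * exp (-y)) (c * exp (-x)) x := by
        intro x
        have h := (((hasDerivAt_id x).neg).exp.const_mul c).const_sub M
        refine h.congr_deriv ?_
        simp only [id_eq, Pi.neg_apply]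
        ring
      have hwt := image_le_of_deriv_right_lt_deriv_boundary (f := w) (f' := deriv w)
        (B := fun y => M - c * exp (-y)) (B' := fun x => c * exp (-x)) hcont hder
        (by rw [hw00]; simp only [neg_zero, exp_zero, mul_one]; linarith) hBder hbound hmem
      have h3 : w t ≤ M - c * exp (-t) := hwt
      nlinarith [exp_pos (-t)]
end
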